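/- Reduction of the marginal controlled effects to the standard marginal treatment effect under SUTVA (Corollary 3.10, items 3–4): assume m(d,d',u) = m̃(d,u) for all d' (the outcome does not depend on the peer's treatment) and V₁ is independent of the pair (V₀,U). Then for every (p₀,p₁) ∈ (0,1)²: (i) the iterated mixed second partial derivative ∂²F¹/∂p∂q exists at (p₀,p₁) and equals 0, so the identified marginal controlled spillover effect MCSE^{(1)}(p₀,p₁) is zero; and (ii) the iterated mixed second partial derivative ∂²G¹/∂p∂q exists at (p₀,p₁) and equals φ̃₁(p₀) − φ̃₀(p₀), so the identified marginal controlled direct effect MCDE^{(1)}(p₀,p₁) equals the standard marginal treatment effect 𝔼[Y(1) − Y(0) | V₀ = p₀] and does not depend on p₁. -/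

import Mathlib

open MeasureTheory ProbabilityTheory

lemma aux_ind_abs (b : Prop) [Decidable b] : |(if b then (1:ℝ) else 0)| ≤ 1 := by
  split_ifs <;> norm_num

lemma aux_habs2 (x i : ℝ) (hi : |i| ≤ 1) : |x * i| ≤ |x| := by
  calc |x * i| = |x| * |i| := abs_mul _ _
  _ ≤ |x| * 1 := mul_le_mul_of_nonneg_left hi (abs_nonneg x)
  _ = |x| := mul_one _

/-- Reduction of the marginal controlled effects to the standard marginal treatment effect
under SUTVA (Corollary 3.10, items 3–4): if the outcome does not depend on the peer's
treatment and `V₁` is independent of `(V₀,U)`, then the identified MCSE¹ is zero and the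
identified MCDE¹ equals the standard MTE `φ̃₁(p₀) − φ̃₀(p₀)`, independent of `p₁`. -/
theorem sutva_reduction_to_mte
    {Ω 𝒰 : Type*} [MeasurableSpace Ω] [MeasurableSpace 𝒰]
    (μ : Measure Ω) [IsProbabilityMeasure μ]
    (U : Ω → 𝒰) (V₀ V₁ : Ω → ℝ)
    (hU : Measurable U) (hV₀ : Measurable V₀) (hV₁ : Measurable V₁)
    -- V₀, V₁ uniformly distributed on (0,1)
    (hV₀unif : Measure.map V₀ μ = volume.restrict (Set.Ioo (0:ℝ) 1))
    (hV₁unif : Measure.map V₁ μ = volume.restrict (Set.Ioo (0:ℝ) 1))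
    -- bounded measurable outcome function (`true` codes treatment 1, `false` codes 0)
    (m : Bool → Bool → 𝒰 → ℝ) (hm : ∀ d d', Measurable (m d d'))
    (hm_bdd : ∃ B, ∀ d d' u, |m d d' u| ≤ B)
    -- SUTVA: the outcome does not depend on the peer's treatment
    (mt : Bool → 𝒰 → ℝ) (hmt : ∀ d, Measurable (mt d))
    (hmt_bdd : ∃ B, ∀ d u, |mt d u| ≤ B)
    (hSUTVA : ∀ d d' u, m d d' u = mt d u)
    -- V₁ independent of the pair (V₀, U)
    (hV₁indep : IndepFun V₁ (fun ω => (V₀ ω, U ω)) μ)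
    -- continuous bounded version φ̃_d of p ↦ 𝔼[Y(d) | V₀ = p]
    (φt : Bool → ℝ → ℝ)
    (hφt_cont : ∀ d, ContinuousOn (φt d) (Set.Ioo (0:ℝ) 1))
    (hφt_bdd : ∃ B, ∀ d u, |φt d u| ≤ B)
    (hφt : ∀ d, ∀ p ∈ Set.Ioc (0:ℝ) 1,
      (∫ ω, mt d (U ω) * (if V₀ ω ≤ p then (1:ℝ) else 0) ∂μ)
        = ∫ u in Set.Ioc (0:ℝ) p, φt d u)
    -- identified conditional-mean functions F¹ and G¹
    (F1 : ℝ → ℝ → ℝ)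
    (hF1 : ∀ p q, F1 p q =
      (∫ ω, m true true (U ω) * (if V₀ ω ≤ p then (1:ℝ) else 0)
        * (if V₁ ω ≤ q then (1:ℝ) else 0) ∂μ)
      + ∫ ω, m true false (U ω) * (if V₀ ω ≤ p then (1:ℝ) else 0)
        * (if q < V₁ ω then (1:ℝ) else 0) ∂μ)
    (G1 : ℝ → ℝ → ℝ)
    (hG1 : ∀ p q, G1 p q =
      (∫ ω, m true true (U ω) * (if V₀ ω ≤ p then (1:ℝ) else 0)
        * (if V₁ ω ≤ q then (1:ℝ) else 0) ∂μ)
      + ∫ ω, m false true (U ω) * (if p < V₀ ω then (1:ℝ) else 0)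
        * (if V₁ ω ≤ q then (1:ℝ) else 0) ∂μ)
    -- the evaluation point
    (p₀ p₁ : ℝ) (hp₀ : p₀ ∈ Set.Ioo (0:ℝ) 1) (hp₁ : p₁ ∈ Set.Ioo (0:ℝ) 1) :
    -- (i) the iterated mixed second partial derivative of F¹ exists and is zero: MCSE¹ = 0
    (∃ DFq : ℝ → ℝ,
      (∀ᶠ p in nhds p₀, HasDerivAt (fun q => F1 p q) (DFq p) p₁) ∧
      HasDerivAt DFq 0 p₀) ∧
    -- (ii) the iterated mixed second partial derivative of G¹ exists and equals the
    -- standard marginal treatment effect φ̃₁(p₀) − φ̃₀(p₀), which does not depend on p₁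
    (∃ DGq : ℝ → ℝ,
      (∀ᶠ p in nhds p₀, HasDerivAt (fun q => G1 p q) (DGq p) p₁) ∧
      HasDerivAt DGq (φt true p₀ - φt false p₀) p₀) := by
  classical
  obtain ⟨B, hB⟩ := hmt_bdd
  obtain ⟨Bφ, hBφ⟩ := hφt_bdd
  clear hm hm_bdd
  -- basic measurability facts
  have hsV₀ : ∀ p : ℝ, MeasurableSet {ω | V₀ ω ≤ p} := fun p => hV₀ measurableSet_Iic
  have hsV₁ : ∀ q : ℝ, MeasurableSet {ω | V₁ ω ≤ q} := fun q => hV₁ measurableSet_Iic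
  have hiV₀ : ∀ p : ℝ, Measurable (fun ω => if V₀ ω ≤ p then (1:ℝ) else 0) :=
    fun p => Measurable.ite (hsV₀ p) measurable_const measurable_const
  have hiV₀' : ∀ p : ℝ, Measurable (fun ω => if p < V₀ ω then (1:ℝ) else 0) :=
    fun p => Measurable.ite (hV₀ measurableSet_Ioi) measurable_const measurable_const
  have hiV₁ : ∀ q : ℝ, Measurable (fun ω => if V₁ ω ≤ q then (1:ℝ) else 0) :=
    fun q => Measurable.ite (hsV₁ q) measurable_const measurable_const
  have hiV₁' : ∀ q : ℝ, Measurable (fun ω => if q < V₁ ω then (1:ℝ) else 0) :=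
    fun q => Measurable.ite (hV₁ measurableSet_Ioi) measurable_const measurable_const
  -- integrability of bounded measurable functions
  have intb : ∀ f : Ω → ℝ, Measurable f → (∀ ω, |f ω| ≤ B) → Integrable f μ := by
    intro f hf hbd
    exact (integrable_const B).mono' hf.aestronglyMeasurable
      (Filter.Eventually.of_forall fun ω => by rw [Real.norm_eq_abs]; exact hbd ω)
  -- integral of the indicator of {V₁ ≤ q}
  have hrq : ∀ q ∈ Set.Ioo (0:ℝ) 1,
      (∫ ω, (if V₁ ω ≤ q then (1:ℝ) else 0) ∂μ) = q := by
    intro q hq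
    have hset : (fun ω => if V₁ ω ≤ q then (1:ℝ) else 0)
        = Set.indicator (V₁ ⁻¹' Set.Iic q) (fun _ => (1:ℝ)) := by
      funext ω
      by_cases h : V₁ ω ≤ q
      · simp [Set.indicator_apply, h]
      · simp [Set.indicator_apply, h]
    rw [hset, integral_indicator_const _ (hV₁ measurableSet_Iic), measureReal_def,
      ← Measure.map_apply hV₁ measurableSet_Iic, hV₁unif,
      Measure.restrict_apply measurableSet_Iic]
    have hIq : Set.Iic q ∩ Set.Ioo (0:ℝ) 1 = Set.Ioc 0 q := by
      ext x
      simp only [Set.mem_inter_iff, Set.mem_Iic, Set.mem_Ioo, Set.mem_Ioc]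
      constructor
      · rintro ⟨h1, h2, h3⟩; exact ⟨h2, h1⟩
      · rintro ⟨h1, h2⟩; exact ⟨h2, h1, lt_of_le_of_lt h2 hq.2⟩
    rw [hIq, Real.volume_Ioc]
    simp [ENNReal.toReal_ofReal, hq.1.le]
  -- part (i): F1 p · is constant
  have hFconst : ∀ p q : ℝ, F1 p q
      = ∫ ω, mt true (U ω) * (if V₀ ω ≤ p then (1:ℝ) else 0) ∂μ := by
    intro p q
    rw [hF1 p q]
    simp only [hSUTVA]
    have h1 : Integrable (fun ω => mt true (U ω) * (if V₀ ω ≤ p then (1:ℝ) else 0)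
        * (if V₁ ω ≤ q then (1:ℝ) else 0)) μ :=
      intb _ ((((hmt true).comp hU).mul (hiV₀ p)).mul (hiV₁ q))
        (fun ω => le_trans (aux_habs2 _ _ (aux_ind_abs _))
          (le_trans (aux_habs2 _ _ (aux_ind_abs _)) (hB true (U ω))))
    have h2 : Integrable (fun ω => mt true (U ω) * (if V₀ ω ≤ p then (1:ℝ) else 0)
        * (if q < V₁ ω then (1:ℝ) else 0)) μ :=
      intb _ ((((hmt true).comp hU).mul (hiV₀ p)).mul (hiV₁' q))
        (fun ω => le_trans (aux_habs2 _ _ (aux_ind_abs _))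
          (le_trans (aux_habs2 _ _ (aux_ind_abs _)) (hB true (U ω))))
    rw [← integral_add h1 h2]
    refine integral_congr_ae (Filter.Eventually.of_forall fun ω => ?_)
    rcases le_or_gt (V₁ ω) q with h | h
    · simp [h, not_lt.2 h]
    · simp [h, not_le.2 h]
  -- independence of the V₀,U-part and the V₁-indicator
  have indepT : ∀ p q : ℝ, IndepFun
      (fun ω => mt true (U ω) * (if V₀ ω ≤ p then (1:ℝ) else 0))
      (fun ω => if V₁ ω ≤ q then (1:ℝ) else 0) μ := by
    intro p q
    have hg : Measurable (fun x : ℝ × 𝒰 => mt true x.2 * (if x.1 ≤ p then (1:ℝ) else 0)) :=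
      ((hmt true).comp measurable_snd).mul
        (Measurable.ite (measurable_fst measurableSet_Iic) measurable_const measurable_const)
    have hφ : Measurable (fun v : ℝ => if v ≤ q then (1:ℝ) else 0) :=
      Measurable.ite measurableSet_Iic measurable_const measurable_const
    exact hV₁indep.symm.comp hg hφ
  have indepF : ∀ p q : ℝ, IndepFun
      (fun ω => mt false (U ω) * (if p < V₀ ω then (1:ℝ) else 0))
      (fun ω => if V₁ ω ≤ q then (1:ℝ) else 0) μ := by
    intro p q
    have hg : Measurable (fun x : ℝ × 𝒰 => mt false x.2 * (if p < x.1 then (1:ℝ) else 0)) :=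
      ((hmt false).comp measurable_snd).mul
        (Measurable.ite (measurable_fst measurableSet_Ioi) measurable_const measurable_const)
    have hφ : Measurable (fun v : ℝ => if v ≤ q then (1:ℝ) else 0) :=
      Measurable.ite measurableSet_Iic measurable_const measurable_const
    exact hV₁indep.symm.comp hg hφ
  -- factorization of the two G1 integrals
  have k1 : ∀ p : ℝ, ∀ q ∈ Set.Ioo (0:ℝ) 1,
      (∫ ω, mt true (U ω) * (if V₀ ω ≤ p then (1:ℝ) else 0)
        * (if V₁ ω ≤ q then (1:ℝ) else 0) ∂μ)
      = (∫ ω, mt true (U ω) * (if V₀ ω ≤ p then (1:ℝ) else 0) ∂μ) * q := by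
    intro p q hq
    have h2 : (∫ ω, mt true (U ω) * (if V₀ ω ≤ p then (1:ℝ) else 0)
          * (if V₁ ω ≤ q then (1:ℝ) else 0) ∂μ)
        = (∫ ω, mt true (U ω) * (if V₀ ω ≤ p then (1:ℝ) else 0) ∂μ)
          * ∫ ω, (if V₁ ω ≤ q then (1:ℝ) else 0) ∂μ :=
      (indepT p q).integral_mul_eq_mul_integral
        ((((hmt true).comp hU).mul (hiV₀ p)).aestronglyMeasurable)
        ((hiV₁ q).aestronglyMeasurable)
    rw [h2, hrq q hq]
  have k2 : ∀ p : ℝ, ∀ q ∈ Set.Ioo (0:ℝ) 1,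
      (∫ ω, mt false (U ω) * (if p < V₀ ω then (1:ℝ) else 0)
        * (if V₁ ω ≤ q then (1:ℝ) else 0) ∂μ)
      = (∫ ω, mt false (U ω) * (if p < V₀ ω then (1:ℝ) else 0) ∂μ) * q := by
    intro p q hq
    have h2 : (∫ ω, mt false (U ω) * (if p < V₀ ω then (1:ℝ) else 0)
          * (if V₁ ω ≤ q then (1:ℝ) else 0) ∂μ)
        = (∫ ω, mt false (U ω) * (if p < V₀ ω then (1:ℝ) else 0) ∂μ)
          * ∫ ω, (if V₁ ω ≤ q then (1:ℝ) else 0) ∂μ :=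
      (indepF p q).integral_mul_eq_mul_integral
        ((((hmt false).comp hU).mul (hiV₀' p)).aestronglyMeasurable)
        ((hiV₁ q).aestronglyMeasurable)
    rw [h2, hrq q hq]
  -- complementary-indicator splitting
  have hsplit : ∀ p : ℝ,
      (∫ ω, mt false (U ω) * (if p < V₀ ω then (1:ℝ) else 0) ∂μ)
      = (∫ ω, mt false (U ω) ∂μ)
        - ∫ ω, mt false (U ω) * (if V₀ ω ≤ p then (1:ℝ) else 0) ∂μ := by
    intro p
    have h1 : Integrable (fun ω => mt false (U ω) * (if p < V₀ ω then (1:ℝ) else 0)) μ :=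
      intb _ (((hmt false).comp hU).mul (hiV₀' p))
        (fun ω => le_trans (aux_habs2 _ _ (aux_ind_abs _)) (hB false (U ω)))
    have h2 : Integrable (fun ω => mt false (U ω) * (if V₀ ω ≤ p then (1:ℝ) else 0)) μ :=
      intb _ (((hmt false).comp hU).mul (hiV₀ p))
        (fun ω => le_trans (aux_habs2 _ _ (aux_ind_abs _)) (hB false (U ω)))
    have h3 : (fun ω => mt false (U ω))
        = fun ω => mt false (U ω) * (if p < V₀ ω then (1:ℝ) else 0)
          + mt false (U ω) * (if V₀ ω ≤ p then (1:ℝ) else 0) := by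
      funext ω
      rcases le_or_gt (V₀ ω) p with h | h
      · simp [h, not_lt.2 h]
      · simp [h, not_le.2 h]
    have h4 : (∫ ω, mt false (U ω) ∂μ)
        = (∫ ω, mt false (U ω) * (if p < V₀ ω then (1:ℝ) else 0) ∂μ)
          + ∫ ω, mt false (U ω) * (if V₀ ω ≤ p then (1:ℝ) else 0) ∂μ := by
      rw [h3]; exact integral_add h1 h2
    linarith
  -- the closed form for G1 on the strip
  have hGform : ∀ p : ℝ, ∀ q ∈ Set.Ioo (0:ℝ) 1, G1 p q
      = ((∫ ω, mt true (U ω) * (if V₀ ω ≤ p then (1:ℝ) else 0) ∂μ)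
        + ((∫ ω, mt false (U ω) ∂μ)
          - ∫ ω, mt false (U ω) * (if V₀ ω ≤ p then (1:ℝ) else 0) ∂μ)) * q := by
    intro p q hq
    rw [hG1 p q]
    simp only [hSUTVA]
    rw [k1 p q hq, k2 p q hq, hsplit p]
    ring
  constructor
  · -- part (i)
    refine ⟨fun _ => (0:ℝ), Filter.Eventually.of_forall fun p => ?_, hasDerivAt_const p₀ 0⟩
    exact (hasDerivAt_const p₁
        (∫ ω, mt true (U ω) * (if V₀ ω ≤ p then (1:ℝ) else 0) ∂μ)).congr_of_eventuallyEq
      (Filter.Eventually.of_forall fun q => hFconst p q)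
  · -- part (ii)
    refine ⟨fun p => (∫ ω, mt true (U ω) * (if V₀ ω ≤ p then (1:ℝ) else 0) ∂μ)
        + ((∫ ω, mt false (U ω) ∂μ)
          - ∫ ω, mt false (U ω) * (if V₀ ω ≤ p then (1:ℝ) else 0) ∂μ), ?_, ?_⟩
    · refine Filter.Eventually.of_forall fun p => ?_
      have hlin : HasDerivAt (fun q : ℝ =>
          ((∫ ω, mt true (U ω) * (if V₀ ω ≤ p then (1:ℝ) else 0) ∂μ)
          + ((∫ ω, mt false (U ω) ∂μ)
            - ∫ ω, mt false (U ω) * (if V₀ ω ≤ p then (1:ℝ) else 0) ∂μ)) * q)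
          ((∫ ω, mt true (U ω) * (if V₀ ω ≤ p then (1:ℝ) else 0) ∂μ)
          + ((∫ ω, mt false (U ω) ∂μ)
            - ∫ ω, mt false (U ω) * (if V₀ ω ≤ p then (1:ℝ) else 0) ∂μ)) p₁ := by
        simpa using (hasDerivAt_id p₁).const_mul
          ((∫ ω, mt true (U ω) * (if V₀ ω ≤ p then (1:ℝ) else 0) ∂μ)
          + ((∫ ω, mt false (U ω) ∂μ)
            - ∫ ω, mt false (U ω) * (if V₀ ω ≤ p then (1:ℝ) else 0) ∂μ))
      refine hlin.congr_of_eventuallyEq ?_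
      filter_upwards [Ioo_mem_nhds hp₁.1 hp₁.2] with q hq
      exact hGform p q hq
    · -- FTC step
      set c := p₀ / 2 with hc
      have hc0 : 0 < c := half_pos hp₀.1
      have hcp : c < p₀ := half_lt_self hp₀.1
      have hc1 : c < 1 := hcp.trans hp₀.2
      have hIOn : ∀ (d : Bool) (s : Set ℝ), MeasurableSet s → s ⊆ Set.Ioo (0:ℝ) 1 →
          IntegrableOn (φt d) s volume := by
        intro d s hs hsub
        have hmble : AEStronglyMeasurable (φt d) (volume.restrict s) :=
          ((hφt_cont d).aestronglyMeasurable measurableSet_Ioo).mono_measure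
            (Measure.restrict_mono hsub le_rfl)
        refine Integrable.mono' (g := fun _ => Bφ) ?_ hmble
          (Filter.Eventually.of_forall fun x => by rw [Real.norm_eq_abs]; exact hBφ d x)
        refine (integrableOn_const_iff (C := Bφ)).mpr (Or.inr ?_)
        calc volume s ≤ volume (Set.Ioo (0:ℝ) 1) := measure_mono hsub
        _ < ⊤ := by simp [Real.volume_Ioo]
      have hFTC : ∀ d : Bool, HasDerivAt (fun p => ∫ x in c..p, φt d x) (φt d p₀) p₀ := by
        intro d
        refine intervalIntegral.integral_hasDerivAt_right ?_ ?_ ?_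
        · rw [intervalIntegrable_iff, Set.uIoc_of_le hcp.le]
          exact hIOn d _ measurableSet_Ioc
            (fun x hx => ⟨hc0.trans hx.1, lt_of_le_of_lt hx.2 hp₀.2⟩)
        · exact ⟨Set.Ioo 0 1, Ioo_mem_nhds hp₀.1 hp₀.2,
            (hφt_cont d).aestronglyMeasurable measurableSet_Ioo⟩
        · exact (hφt_cont d).continuousAt (Ioo_mem_nhds hp₀.1 hp₀.2)
      have hAdd : ∀ (d : Bool), ∀ p ∈ Set.Ioo c 1,
          (∫ ω, mt d (U ω) * (if V₀ ω ≤ p then (1:ℝ) else 0) ∂μ)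
          = (∫ ω, mt d (U ω) * (if V₀ ω ≤ c then (1:ℝ) else 0) ∂μ)
            + ∫ x in c..p, φt d x := by
        intro d p hp
        have hp0 : 0 < p := hc0.trans hp.1
        rw [hφt d p ⟨hp0, hp.2.le⟩, hφt d c ⟨hc0, hc1.le⟩,
          intervalIntegral.integral_of_le hp.1.le,
          ← Set.Ioc_union_Ioc_eq_Ioc hc0.le hp.1.le,
          setIntegral_union (Set.Ioc_disjoint_Ioc_of_le le_rfl) measurableSet_Ioc
            (hIOn d _ measurableSet_Ioc
              (fun x hx => ⟨hx.1, lt_of_le_of_lt hx.2 hc1⟩))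
            (hIOn d _ measurableSet_Ioc
              (fun x hx => ⟨hc0.trans hx.1, lt_of_le_of_lt hx.2 hp.2⟩))]
      have hmain : HasDerivAt (fun p =>
          ((∫ x in c..p, φt true x)
            + ((∫ ω, mt true (U ω) * (if V₀ ω ≤ c then (1:ℝ) else 0) ∂μ)
              + ((∫ ω, mt false (U ω) ∂μ)
                - ∫ ω, mt false (U ω) * (if V₀ ω ≤ c then (1:ℝ) else 0) ∂μ)))
          - ∫ x in c..p, φt false x) (φt true p₀ - φt false p₀) p₀ :=
        ((hFTC true).add_const _).sub (hFTC false)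
      refine hmain.congr_of_eventuallyEq ?_
      filter_upwards [Ioo_mem_nhds hcp hp₀.2] with p hp
      rw [hAdd true p hp, hAdd false p hp]
      ring
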